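/- Under the coverage assumption Q(x) ∈ 𝒫(x) for all x ∈ X (Wasserstein balls of radius r_N) and Lipschitz continuity of h in its second argument with constant c_p, the out-of-sample value J_N of a DRO-optimal solution satisfies J* ≤ J_N ≤ J* + 2 c_p r_N, where J* = min_x 𝔼_{Q(x)}[h(x,ξ)] is the true optimal value. -/

import Mathlib

open MeasureTheory
open scoped ENNReal

/-- A coupling of two measures: a measure on the product whose marginals are `P` and `Q`. -/
def IsCoupling {Ξ : Type*} [MeasurableSpace Ξ] (P Q : Measure Ξ) (γ : Measure (Ξ × Ξ)) : Prop :=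
  γ.map Prod.fst = P ∧ γ.map Prod.snd = Q

/-- The L¹-Wasserstein distance: the infimum of the transport cost over all couplings. -/
noncomputable def wassersteinDist {Ξ : Type*} [MeasurableSpace Ξ] [PseudoMetricSpace Ξ]
    (P Q : Measure Ξ) : ℝ :=
  sInf {r : ℝ | ∃ γ : Measure (Ξ × Ξ), IsCoupling P Q γ ∧ ∫ p, dist p.1 p.2 ∂γ = r}

/-- Kantorovich–Rubinstein type bound: for a Lipschitz function, the difference of
integrals against two probability measures is bounded by the Wasserstein distance. -/
theorem kr_bound {Ξ : Type*} [MeasurableSpace Ξ] [MetricSpace Ξ] [CompactSpace Ξ] [BorelSpace Ξ]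
    (P Q : Measure Ξ) [IsProbabilityMeasure P] [IsProbabilityMeasure Q]
    (f : Ξ → ℝ) (cp : ℝ) (hcp : 0 ≤ cp)
    (hLip : ∀ s₁ s₂, |f s₁ - f s₂| ≤ cp * dist s₁ s₂) :
    |∫ s, f s ∂P - ∫ s, f s ∂Q| ≤ cp * wassersteinDist P Q := by
  have hcont : Continuous f := by
    refine (LipschitzWith.of_dist_le_mul (K := ⟨cp, hcp⟩) ?_).continuous
    intro s₁ s₂
    rw [Real.dist_eq]; exact hLip s₁ s₂
  set S : Set ℝ :=
    {r : ℝ | ∃ γ : Measure (Ξ × Ξ), IsCoupling P Q γ ∧ ∫ p, dist p.1 p.2 ∂γ = r} with hS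
  -- the product coupling witnesses nonemptiness
  have hne : S.Nonempty := by
    refine ⟨∫ p, dist p.1 p.2 ∂(P.prod Q), P.prod Q, ⟨?_, ?_⟩, rfl⟩
    · simp [Measure.map_fst_prod]
    · simp [Measure.map_snd_prod]
  have hbelow : ∀ r ∈ S, (0:ℝ) ≤ r := by
    rintro r ⟨γ, _, rfl⟩
    exact integral_nonneg fun p => dist_nonneg
  -- key estimate per coupling
  have hkey : ∀ r ∈ S, |∫ s, f s ∂P - ∫ s, f s ∂Q| ≤ cp * r := by
    rintro r ⟨γ, ⟨hγ1, hγ2⟩, rfl⟩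
    have hγprob : IsProbabilityMeasure γ := by
      constructor
      have : γ.map Prod.fst Set.univ = 1 := by rw [hγ1]; exact measure_univ
      rwa [Measure.map_apply measurable_fst MeasurableSet.univ, Set.preimage_univ] at this
    have hint1 : Integrable (fun p : Ξ × Ξ => f p.1) γ :=
      (hcont.comp continuous_fst).integrable_of_hasCompactSupport
        (HasCompactSupport.of_compactSpace _)
    have hint2 : Integrable (fun p : Ξ × Ξ => f p.2) γ :=
      (hcont.comp continuous_snd).integrable_of_hasCompactSupport
        (HasCompactSupport.of_compactSpace _)
    have hintd : Integrable (fun p : Ξ × Ξ => cp * dist p.1 p.2) γ :=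
      ((continuous_const.mul (continuous_fst.dist continuous_snd))).integrable_of_hasCompactSupport
        (HasCompactSupport.of_compactSpace _)
    have hP : ∫ s, f s ∂P = ∫ p : Ξ × Ξ, f p.1 ∂γ := by
      rw [← hγ1, integral_map measurable_fst.aemeasurable hcont.aestronglyMeasurable]
    have hQ : ∫ s, f s ∂Q = ∫ p : Ξ × Ξ, f p.2 ∂γ := by
      rw [← hγ2, integral_map measurable_snd.aemeasurable hcont.aestronglyMeasurable]
    rw [hP, hQ, ← integral_sub hint1 hint2]
    calc |∫ p : Ξ × Ξ, (f p.1 - f p.2) ∂γ| ≤ ∫ p : Ξ × Ξ, |f p.1 - f p.2| ∂γ := by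
          simpa [Real.norm_eq_abs] using
            norm_integral_le_integral_norm (fun p : Ξ × Ξ => f p.1 - f p.2) (μ := γ)
      _ ≤ ∫ p : Ξ × Ξ, cp * dist p.1 p.2 ∂γ :=
          integral_mono (hint1.sub hint2).abs hintd (fun p => hLip p.1 p.2)
      _ = cp * ∫ p : Ξ × Ξ, dist p.1 p.2 ∂γ := integral_const_mul cp _
  rcases eq_or_lt_of_le hcp with hcp0 | hcp0
  · obtain ⟨r, hr⟩ := hne
    calc |∫ s, f s ∂P - ∫ s, f s ∂Q| ≤ cp * r := hkey r hr
      _ = 0 := by rw [← hcp0]; ring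
      _ ≤ cp * wassersteinDist P Q := by
        rw [← hcp0]; simp
  · have : |∫ s, f s ∂P - ∫ s, f s ∂Q| / cp ≤ sInf S := by
      refine le_csInf hne fun r hr => ?_
      rw [div_le_iff₀ hcp0]
      calc |∫ s, f s ∂P - ∫ s, f s ∂Q| ≤ cp * r := hkey r hr
        _ = r * cp := mul_comm _ _
    calc |∫ s, f s ∂P - ∫ s, f s ∂Q|
        = (|∫ s, f s ∂P - ∫ s, f s ∂Q| / cp) * cp := by field_simp
      _ ≤ sInf S * cp := mul_le_mul_of_nonneg_right this hcp
      _ = cp * wassersteinDist P Q := by rw [mul_comm]; rfl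

/-- Under coverage by Wasserstein-ball ambiguity sets of radius `r_N` and
uniform Lipschitz continuity of `h` in its second argument with constant `c_p`, the
out-of-sample value `J_N` of a DRO-optimal solution `x̂_N` satisfies
`J* ≤ J_N ≤ J* + 2 c_p r_N`, where `J* = min_x 𝔼_{Q(x)}[h(x,ξ)]` is the true optimum. -/
theorem dro_optimality_gap
    {X Ξ : Type*} [Nonempty X] [MeasurableSpace Ξ] [MetricSpace Ξ] [CompactSpace Ξ] [BorelSpace Ξ]
    (Phat Q : X → Measure Ξ) (rN cp : ℝ) (hcp : 0 ≤ cp) (hrN : 0 ≤ rN)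
    (hPhatProb : ∀ x, IsProbabilityMeasure (Phat x))
    (hQProb : ∀ x, IsProbabilityMeasure (Q x))
    (Pamb : X → Set (Measure Ξ))
    (hPamb : ∀ x, Pamb x =
      {P : Measure Ξ | IsProbabilityMeasure P ∧ wassersteinDist P (Phat x) ≤ rN})
    (hcov : ∀ x, Q x ∈ Pamb x)
    (h : X → Ξ → ℝ) (C : ℝ) (hbdd : ∀ x s, |h x s| ≤ C)
    (hLip : ∀ x s₁ s₂, |h x s₁ - h x s₂| ≤ cp * dist s₁ s₂)
    (xhat : X)
    (hmin : sSup ((fun P => ∫ s, h xhat s ∂P) '' Pamb xhat) =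
      ⨅ x, sSup ((fun P => ∫ s, h x s ∂P) '' Pamb x))
    (xstar : X)
    (hstar : (∫ s, h xstar s ∂(Q xstar)) = ⨅ x, ∫ s, h x s ∂(Q x)) :
    (⨅ x, ∫ s, h x s ∂(Q x)) ≤ ∫ s, h xhat s ∂(Q xhat) ∧
      (∫ s, h xhat s ∂(Q xhat)) ≤ (⨅ x, ∫ s, h x s ∂(Q x)) + 2 * cp * rN := by
  classical
  -- any integral of `h x` against a probability measure lies in `[-C, C]`
  have hIbd : ∀ (x : X) (P : Measure Ξ), IsProbabilityMeasure P →
      |∫ s, h x s ∂P| ≤ C := by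
    intro x P hP
    have : ‖∫ s, h x s ∂P‖ ≤ C * (P Set.univ).toReal := by
      refine norm_integral_le_of_norm_le_const ?_
      filter_upwards with s
      simpa [Real.norm_eq_abs] using hbdd x s
    simpa [hP.measure_univ, Real.norm_eq_abs] using this
  -- the family x ↦ ∫ h x dQ(x) is bounded below
  have hBddJ : BddBelow (Set.range fun x => ∫ s, h x s ∂(Q x)) := by
    refine ⟨-C, ?_⟩
    rintro v ⟨x, rfl⟩
    exact neg_le_of_abs_le (hIbd x (Q x) (hQProb x))
  -- membership description of the ambiguity sets
  have hmem : ∀ (x : X) (P : Measure Ξ), P ∈ Pamb x →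
      IsProbabilityMeasure P ∧ wassersteinDist P (Phat x) ≤ rN := by
    intro x P hP
    rw [hPamb x] at hP
    exact hP
  -- each image set is bounded above by C and contains ∫ h x dQ(x)
  have hBddAbove : ∀ x, BddAbove ((fun P => ∫ s, h x s ∂P) '' Pamb x) := by
    intro x
    refine ⟨C, ?_⟩
    rintro v ⟨P, hP, rfl⟩
    exact le_of_abs_le (hIbd x P (hmem x P hP).1)
  have hQmem : ∀ x, (∫ s, h x s ∂(Q x)) ∈ (fun P => ∫ s, h x s ∂P) '' Pamb x :=
    fun x => ⟨Q x, hcov x, rfl⟩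
  -- first inequality: J* ≤ J_N
  have h1 : (⨅ x, ∫ s, h x s ∂(Q x)) ≤ ∫ s, h xhat s ∂(Q xhat) := ciInf_le hBddJ xhat
  -- J_N ≤ Ĵ_N
  have h2 : (∫ s, h xhat s ∂(Q xhat)) ≤
      sSup ((fun P => ∫ s, h xhat s ∂P) '' Pamb xhat) :=
    le_csSup (hBddAbove xhat) (hQmem xhat)
  -- Ĵ_N ≤ sup over 𝒫(x*)
  have hBddSup : BddBelow (Set.range fun x =>
      sSup ((fun P => ∫ s, h x s ∂P) '' Pamb x)) := by
    refine ⟨-C, ?_⟩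
    rintro v ⟨x, rfl⟩
    exact le_trans (neg_le_of_abs_le (hIbd x (Q x) (hQProb x)))
      (le_csSup (hBddAbove x) (hQmem x))
  have h3 : sSup ((fun P => ∫ s, h xhat s ∂P) '' Pamb xhat) ≤
      sSup ((fun P => ∫ s, h xstar s ∂P) '' Pamb xstar) := by
    rw [hmin]
    exact ciInf_le hBddSup xstar
  -- Kantorovich–Rubinstein at x*
  have h4 : sSup ((fun P => ∫ s, h xstar s ∂P) '' Pamb xstar) ≤
      (∫ s, h xstar s ∂(Q xstar)) + 2 * cp * rN := by
    refine csSup_le ⟨_, hQmem xstar⟩ ?_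
    rintro v ⟨P, hP, rfl⟩
    obtain ⟨hPprob, hPw⟩ := hmem xstar P hP
    obtain ⟨hQprob', hQw⟩ := hmem xstar (Q xstar) (hcov xstar)
    haveI := hPprob
    haveI := hPhatProb xstar
    haveI := hQProb xstar
    have e1 : (∫ s, h xstar s ∂P) - (∫ s, h xstar s ∂(Phat xstar)) ≤ cp * rN := by
      have := kr_bound P (Phat xstar) (h xstar) cp hcp (hLip xstar)
      have h' := le_trans (le_abs_self _) this
      exact le_trans h' (mul_le_mul_of_nonneg_left hPw hcp)
    have e2 : (∫ s, h xstar s ∂(Phat xstar)) - (∫ s, h xstar s ∂(Q xstar)) ≤ cp * rN := by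
      have := kr_bound (Q xstar) (Phat xstar) (h xstar) cp hcp (hLip xstar)
      have h' := le_trans (neg_le_abs _) this
      have h'' : -(∫ s, h xstar s ∂(Q xstar) - ∫ s, h xstar s ∂(Phat xstar)) ≤ cp * rN :=
        le_trans h' (mul_le_mul_of_nonneg_left hQw hcp)
      linarith
    linarith
  refine ⟨h1, ?_⟩
  calc (∫ s, h xhat s ∂(Q xhat))
      ≤ sSup ((fun P => ∫ s, h xstar s ∂P) '' Pamb xstar) := le_trans h2 h3
    _ ≤ (∫ s, h xstar s ∂(Q xstar)) + 2 * cp * rN := h4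
    _ = (⨅ x, ∫ s, h x s ∂(Q x)) + 2 * cp * rN := by rw [hstar]
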